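/- There exist δ > 0 and q < 1 such that for every p with |p − 3/4| ≤ δ, every n ≥ 1, and every λ ∈ ℝ^n with ∑_{j=1}^n λ_j² = 1, one has 𝔼| ∑_{j=1}^n λ_j ξ_j | ≤ q, where ξ_1, …, ξ_n are the i.i.d. random variables associated with p. The bounds δ and q do not depend on n or on λ. -/

import Mathlib

/-- The value of the random variable `ξ_j` associated with `p`: it takes the value
`√((1−p)/p)` (encoded by `true`) and `−√(p/(1−p))` (encoded by `false`). -/
noncomputable def xiVal (p : ℝ) (b : Bool) : ℝ :=
  if b then Real.sqrt ((1 - p) / p) else -Real.sqrt (p / (1 - p))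

/-- The probability weight: `true` (the value `√((1−p)/p)`) has probability `p`,
`false` (the value `−√(p/(1−p))`) has probability `1 − p`. -/
def wt (p : ℝ) (b : Bool) : ℝ := if b then p else 1 - p

/-- `𝔼|∑_{j=1}^n λ_j ξ_j|` for i.i.d. `ξ_1, …, ξ_n` associated with `p`, written as the
explicit expectation over the product space `Bool^n`. -/
noncomputable def expAbsSum (p : ℝ) (n : ℕ) (l : Fin n → ℝ) : ℝ :=
  ∑ σ : Fin n → Bool, (∏ j, wt p (σ j)) * |∑ j, l j * xiVal p (σ j)|

/-- There exist `δ > 0` and `q < 1` such that for every `p` with `|p − 3/4| ≤ δ`,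
every `n ≥ 1` and every unit vector `λ ∈ ℝ^n`, one has `𝔼|∑ λ_j ξ_j| ≤ q`, where
`ξ_1, …, ξ_n` are the i.i.d. random variables associated with `p`.  The bounds `δ`
and `q` do not depend on `n` or `λ`. -/
noncomputable def xm (p : ℝ) (k : ℕ) : ℝ := p * (xiVal p true)^k + (1-p) * (xiVal p false)^k

noncomputable def mom (p : ℝ) (n : ℕ) (l : Fin n → ℝ) (k : ℕ) : ℝ :=
  ∑ σ : Fin n → Bool, (∏ j, wt p (σ j)) * (∑ j, l j * xiVal p (σ j))^k

lemma xiVal_true (p : ℝ) : xiVal p true = Real.sqrt ((1-p)/p) := rfl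
lemma xiVal_false (p : ℝ) : xiVal p false = -Real.sqrt (p/(1-p)) := rfl

lemma mom_zero (p : ℝ) (l : Fin 0 → ℝ) (k : ℕ) : mom p 0 l k = (0:ℝ)^k := by
  simp [mom]

lemma mom_succ (p : ℝ) (n : ℕ) (l : Fin (n+1) → ℝ) (k : ℕ) :
    mom p (n+1) l k = ∑ i ∈ Finset.range (k+1),
      (k.choose i : ℝ) * ((l 0)^i * xm p i) * mom p n (fun j => l j.succ) (k - i) := by
  unfold mom
  rw [← (Fin.consEquiv (fun _ : Fin (n+1) => Bool)).sum_comp, Fintype.sum_prod_type]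
  have step : ∀ (b : Bool) (τ : Fin n → Bool),
      (∏ j, wt p ((Fin.consEquiv (fun _ : Fin (n+1) => Bool)) (b, τ) j)) *
        (∑ j, l j * xiVal p ((Fin.consEquiv (fun _ : Fin (n+1) => Bool)) (b, τ) j)) ^ k
      = ∑ i ∈ Finset.range (k+1), ((k.choose i : ℝ) * ((l 0 * xiVal p b)^i * wt p b)) *
          ((∏ j, wt p (τ j)) * (∑ j, l j.succ * xiVal p (τ j)) ^ (k - i)) := by
    intro b τ
    have h1 : (Fin.consEquiv (fun _ : Fin (n+1) => Bool)) (b, τ)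
        = (Fin.cons b τ : Fin (n+1) → Bool) := rfl
    rw [h1]
    rw [Fin.prod_univ_succ, Fin.sum_univ_succ]
    simp only [Fin.cons_zero, Fin.cons_succ]
    rw [add_pow, Finset.mul_sum]
    exact Finset.sum_congr rfl fun i _ => by ring
  simp only [step]
  have step2 : ∀ b : Bool,
      (∑ τ : Fin n → Bool, ∑ i ∈ Finset.range (k+1),
        ((k.choose i : ℝ) * ((l 0 * xiVal p b)^i * wt p b)) *
          ((∏ j, wt p (τ j)) * (∑ j, l j.succ * xiVal p (τ j)) ^ (k - i)))
      = ∑ i ∈ Finset.range (k+1),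
        ((k.choose i : ℝ) * ((l 0 * xiVal p b)^i * wt p b)) * mom p n (fun j => l j.succ) (k-i) := by
    intro b
    rw [Finset.sum_comm]
    exact Finset.sum_congr rfl fun i _ => (Finset.mul_sum _ _ _).symm
  simp only [step2]
  rw [Finset.sum_comm]
  refine Finset.sum_congr rfl fun i _ => ?_
  rw [← Finset.sum_mul]
  congr 1
  rw [Fintype.sum_bool]
  show (k.choose i : ℝ) * ((l 0 * xiVal p true)^i * p) +
       (k.choose i : ℝ) * ((l 0 * xiVal p false)^i * (1-p)) = _
  rw [mul_pow, mul_pow]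
  unfold xm
  ring

section xmvals

variable {p : ℝ} (hp1 : 37/50 ≤ p) (hp2 : p ≤ 19/25)
include hp1 hp2

set_option linter.unusedSectionVars false

lemma interval_prod : 0 ≤ (p - 37/50) * (19/25 - p) :=
  mul_nonneg (by linarith) (by linarith)

lemma xm0 : xm p 0 = 1 := by simp [xm]

lemma xm1 : xm p 1 = 0 := by
  have h0 : (0:ℝ) < p := by linarith
  have hu : (0:ℝ) < 1 - p := by linarith
  have e1 : p * Real.sqrt ((1-p)/p) = Real.sqrt (p*(1-p)) := by
    rw [← Real.sqrt_sq h0.le, ← Real.sqrt_mul (sq_nonneg p)]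
    congr 1; rw [Real.sqrt_sq h0.le]; field_simp
  have e2 : (1-p) * Real.sqrt (p/(1-p)) = Real.sqrt (p*(1-p)) := by
    rw [← Real.sqrt_sq hu.le, ← Real.sqrt_mul (sq_nonneg (1-p))]
    congr 1; rw [Real.sqrt_sq hu.le]; field_simp
  simp only [xm, xiVal_true, xiVal_false, pow_one, mul_neg]
  linarith [e1, e2]

lemma xm2 : xm p 2 = 1 := by
  have h0 : (0:ℝ) < p := by linarith
  have hu : (0:ℝ) < 1 - p := by linarith
  have hA : (Real.sqrt ((1-p)/p))^2 = (1-p)/p := Real.sq_sqrt (by positivity)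
  have hB : (Real.sqrt (p/(1-p)))^2 = p/(1-p) := Real.sq_sqrt (by positivity)
  simp only [xm, xiVal_true, xiVal_false]
  rw [show (-Real.sqrt (p/(1-p)))^2 = (Real.sqrt (p/(1-p)))^2 by ring, hA, hB]
  field_simp
  ring

lemma xm3sq : (xm p 3)^2 ≤ 4 := by
  have h0 : (0:ℝ) < p := by linarith
  have hu : (0:ℝ) < 1 - p := by linarith
  have hA : (Real.sqrt ((1-p)/p))^2 = (1-p)/p := Real.sq_sqrt (by positivity)
  have hB : (Real.sqrt (p/(1-p)))^2 = p/(1-p) := Real.sq_sqrt (by positivity)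
  have e1 : p * Real.sqrt ((1-p)/p) = Real.sqrt (p*(1-p)) := by
    rw [← Real.sqrt_sq h0.le, ← Real.sqrt_mul (sq_nonneg p)]
    congr 1; rw [Real.sqrt_sq h0.le]; field_simp
  have e2 : (1-p) * Real.sqrt (p/(1-p)) = Real.sqrt (p*(1-p)) := by
    rw [← Real.sqrt_sq hu.le, ← Real.sqrt_mul (sq_nonneg (1-p))]
    congr 1; rw [Real.sqrt_sq hu.le]; field_simp
  have e : xm p 3 = Real.sqrt (p*(1-p)) * ((1-p)/p - p/(1-p)) := by
    simp only [xm, xiVal_true, xiVal_false]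
    have r1 : p * (Real.sqrt ((1-p)/p))^3
        = Real.sqrt (p*(1-p)) * ((1-p)/p) := by
      rw [show (Real.sqrt ((1-p)/p))^3 = (Real.sqrt ((1-p)/p))^2 * Real.sqrt ((1-p)/p) by ring, hA]
      calc p * ((1-p)/p * Real.sqrt ((1-p)/p)) = (p * Real.sqrt ((1-p)/p)) * ((1-p)/p) := by ring
        _ = _ := by rw [e1]
    have r2 : (1-p) * (Real.sqrt (p/(1-p)))^3
        = Real.sqrt (p*(1-p)) * (p/(1-p)) := by
      rw [show (Real.sqrt (p/(1-p)))^3 = (Real.sqrt (p/(1-p)))^2 * Real.sqrt (p/(1-p)) by ring, hB]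
      calc (1-p) * (p/(1-p) * Real.sqrt (p/(1-p))) = ((1-p) * Real.sqrt (p/(1-p))) * (p/(1-p)) := by ring
        _ = _ := by rw [e2]
    rw [show (-Real.sqrt (p/(1-p)))^3 = -((Real.sqrt (p/(1-p)))^3) by ring]
    linear_combination r1 - r2
  rw [e, mul_pow, Real.sq_sqrt (by positivity : (0:ℝ) ≤ p*(1-p))]
  have e3 : (1-p)/p - p/(1-p) = (1-2*p)/(p*(1-p)) := by field_simp; ring
  rw [e3, div_pow]
  have e4 : p*(1-p) * ((1-2*p)^2/(p*(1-p))^2) = (1-2*p)^2/(p*(1-p)) := by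
    field_simp
  rw [e4, div_le_iff₀ (by positivity : (0:ℝ) < p*(1-p))]
  nlinarith [interval_prod hp1 hp2]

lemma xm4eq : xm p 4 = (1-p)^2/p + p^2/(1-p) := by
  have h0 : (0:ℝ) < p := by linarith
  have hu : (0:ℝ) < 1 - p := by linarith
  have hA : (Real.sqrt ((1-p)/p))^2 = (1-p)/p := Real.sq_sqrt (by positivity)
  have hB : (Real.sqrt (p/(1-p)))^2 = p/(1-p) := Real.sq_sqrt (by positivity)
  simp only [xm, xiVal_true, xiVal_false]
  rw [show (-Real.sqrt (p/(1-p)))^4 = ((Real.sqrt (p/(1-p)))^2)^2 by ring,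
      show (Real.sqrt ((1-p)/p))^4 = ((Real.sqrt ((1-p)/p))^2)^2 by ring, hA, hB]
  field_simp

lemma xm4lb : 2 ≤ xm p 4 := by
  have h0 : (0:ℝ) < p := by linarith
  have hu : (0:ℝ) < 1 - p := by linarith
  rw [xm4eq hp1 hp2, div_add_div _ _ (ne_of_gt h0) (ne_of_gt hu), le_div_iff₀ (by positivity)]
  nlinarith [interval_prod hp1 hp2]

lemma xm4ub : xm p 4 ≤ 3 := by
  have h0 : (0:ℝ) < p := by linarith
  have hu : (0:ℝ) < 1 - p := by linarith
  rw [xm4eq hp1 hp2, div_add_div _ _ (ne_of_gt h0) (ne_of_gt hu), div_le_iff₀ (by positivity)]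
  nlinarith [interval_prod hp1 hp2]

lemma xm6ub : xm p 6 ≤ 16 := by
  have h0 : (0:ℝ) < p := by linarith
  have hu : (0:ℝ) < 1 - p := by linarith
  have hA : (Real.sqrt ((1-p)/p))^2 = (1-p)/p := Real.sq_sqrt (by positivity)
  have hB : (Real.sqrt (p/(1-p)))^2 = p/(1-p) := Real.sq_sqrt (by positivity)
  have e : xm p 6 = (1-p)^3/p^2 + p^3/(1-p)^2 := by
    simp only [xm, xiVal_true, xiVal_false]
    rw [show (-Real.sqrt (p/(1-p)))^6 = ((Real.sqrt (p/(1-p)))^2)^3 by ring,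
        show (Real.sqrt ((1-p)/p))^6 = ((Real.sqrt ((1-p)/p))^2)^3 by ring, hA, hB]
    field_simp
  rw [e, div_add_div _ _ (by positivity) (by positivity), div_le_iff₀ (by positivity)]
  nlinarith [interval_prod hp1 hp2, sq_nonneg (p - 37/50), sq_nonneg (19/25 - p),
    mul_nonneg (interval_prod hp1 hp2) (interval_prod hp1 hp2)]

set_option maxHeartbeats 1000000 in
lemma mom_bounds : ∀ (n : ℕ) (l : Fin n → ℝ),
    mom p n l 0 = 1 ∧ mom p n l 1 = 0 ∧ mom p n l 2 = (∑ j, l j ^ 2) ∧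
    (mom p n l 3)^2 ≤ 4 * (∑ j, l j ^ 2)^3 ∧
    2 * (∑ j, l j ^ 2)^2 ≤ mom p n l 4 ∧ mom p n l 4 ≤ 3 * (∑ j, l j ^ 2)^2 ∧
    mom p n l 6 ≤ 40 * (∑ j, l j ^ 2)^3 := by
  intro n
  induction n with
  | zero => intro l; norm_num [mom_zero]
  | succ n ih =>
    intro l
    obtain ⟨i0, i1, i2, i3, i4l, i4u, i6⟩ := ih (fun j => l j.succ)
    set t : ℝ := ∑ j : Fin n, (l j.succ) ^ 2 with ht
    have htnn : 0 ≤ t := Finset.sum_nonneg fun j _ => sq_nonneg _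
    have hxnn : (0:ℝ) ≤ (l 0)^2 := sq_nonneg _
    have hsum : (∑ j : Fin (n+1), l j ^ 2) = (l 0)^2 + t := by
      rw [Fin.sum_univ_succ]
    have e0 : mom p (n+1) l 0 = 1 := by
      rw [mom_succ]
      norm_num [xm0 hp1 hp2, i0]
    have e1 : mom p (n+1) l 1 = 0 := by
      rw [mom_succ]
      norm_num [Finset.sum_range_succ, xm0 hp1 hp2, xm1 hp1 hp2, i0, i1]
    have e2 : mom p (n+1) l 2 = t + (l 0)^2 := by
      rw [mom_succ]
      norm_num [Finset.sum_range_succ, xm0 hp1 hp2, xm1 hp1 hp2, xm2 hp1 hp2, i0, i1, i2]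
    have e3 : mom p (n+1) l 3 = mom p n (fun j => l j.succ) 3 + (l 0)^3 * xm p 3 := by
      rw [mom_succ]
      norm_num [show Nat.choose 4 2 = 6 from rfl, show Nat.choose 6 2 = 15 from rfl, show Nat.choose 6 3 = 20 from rfl, show Nat.choose 6 4 = 15 from rfl, show Nat.choose 6 5 = 6 from rfl, Finset.sum_range_succ, xm0 hp1 hp2, xm1 hp1 hp2, xm2 hp1 hp2, i0, i1, i2]
      try ring
    have e4 : mom p (n+1) l 4 = mom p n (fun j => l j.succ) 4 + 6*(l 0)^2*t + (l 0)^4 * xm p 4 := by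
      rw [mom_succ]
      norm_num [show Nat.choose 4 2 = 6 from rfl, show Nat.choose 6 2 = 15 from rfl, show Nat.choose 6 3 = 20 from rfl, show Nat.choose 6 4 = 15 from rfl, show Nat.choose 6 5 = 6 from rfl, Finset.sum_range_succ, xm0 hp1 hp2, xm1 hp1 hp2, xm2 hp1 hp2, i0, i1, i2]
      try ring
    have e6 : mom p (n+1) l 6 = mom p n (fun j => l j.succ) 6
        + 15*(l 0)^2 * mom p n (fun j => l j.succ) 4
        + 20*(l 0)^3 * xm p 3 * mom p n (fun j => l j.succ) 3
        + 15*(l 0)^4 * xm p 4 * t + (l 0)^6 * xm p 6 := by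
      rw [mom_succ]
      norm_num [show Nat.choose 4 2 = 6 from rfl, show Nat.choose 6 2 = 15 from rfl, show Nat.choose 6 3 = 20 from rfl, show Nat.choose 6 4 = 15 from rfl, show Nat.choose 6 5 = 6 from rfl, Finset.sum_range_succ, xm0 hp1 hp2, xm1 hp1 hp2, xm2 hp1 hp2, i0, i1, i2]
      try ring
    -- cross term bound
    have hc2 : ((l 0)^3 * xm p 3 * mom p n (fun j => l j.succ) 3)^2
        ≤ (2*(l 0)^2*t*((l 0)^2+t))^2 := by
      have b1 : (xm p 3)^2 * (mom p n (fun j => l j.succ) 3)^2 ≤ 4 * (4*t^3) :=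
        mul_le_mul (xm3sq hp1 hp2) i3 (sq_nonneg _) (by norm_num)
      nlinarith [sq_nonneg (2*(l 0)^2*t*((l 0)^2 - t)),
        mul_le_mul_of_nonneg_left b1 (pow_nonneg hxnn 3)]
    have hM : (0:ℝ) ≤ 2*(l 0)^2*t*((l 0)^2+t) := by positivity
    have habs : |(l 0)^3 * xm p 3 * mom p n (fun j => l j.succ) 3| ≤ 2*(l 0)^2*t*((l 0)^2+t) := by
      rw [← Real.sqrt_sq_eq_abs]
      calc Real.sqrt (((l 0)^3 * xm p 3 * mom p n (fun j => l j.succ) 3)^2)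
          ≤ Real.sqrt ((2*(l 0)^2*t*((l 0)^2+t))^2) := Real.sqrt_le_sqrt hc2
        _ = |2*(l 0)^2*t*((l 0)^2+t)| := Real.sqrt_sq_eq_abs _
        _ = 2*(l 0)^2*t*((l 0)^2+t) := abs_of_nonneg hM
    obtain ⟨hcl, hcu⟩ := abs_le.mp habs
    have hx3m : (l 0)^6 * (xm p 3)^2 ≤ (l 0)^6 * 4 :=
      mul_le_mul_of_nonneg_left (xm3sq hp1 hp2) (by positivity)
    refine ⟨e0, e1, ?_, ?_, ?_, ?_, ?_⟩
    · rw [e2, hsum]; ring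
    · rw [e3, hsum]
      nlinarith [i3, hcu, hcl, hx3m, mul_nonneg (mul_nonneg hxnn htnn) htnn,
        mul_nonneg (mul_nonneg hxnn hxnn) htnn]
    · rw [e4, hsum]
      have h4 : (l 0)^4 * 2 ≤ (l 0)^4 * xm p 4 :=
        mul_le_mul_of_nonneg_left (xm4lb hp1 hp2) (by positivity)
      nlinarith [i4l, h4, mul_nonneg hxnn htnn]
    · rw [e4, hsum]
      have h4 : (l 0)^4 * xm p 4 ≤ (l 0)^4 * 3 :=
        mul_le_mul_of_nonneg_left (xm4ub hp1 hp2) (by positivity)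
      nlinarith [i4u, h4, mul_nonneg hxnn htnn]
    · rw [e6, hsum]
      have h4 : (l 0)^4 * xm p 4 * t ≤ (l 0)^4 * 3 * t :=
        mul_le_mul_of_nonneg_right
          (mul_le_mul_of_nonneg_left (xm4ub hp1 hp2) (by positivity)) htnn
      have h6 : (l 0)^6 * xm p 6 ≤ (l 0)^6 * 16 :=
        mul_le_mul_of_nonneg_left (xm6ub hp1 hp2) (by positivity)
      have h15 : 15*(l 0)^2 * mom p n (fun j => l j.succ) 4 ≤ 15*(l 0)^2 * (3*t^2) :=
        mul_le_mul_of_nonneg_left i4u (by positivity)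
      nlinarith [i6, h4, h6, h15, hcu, mul_nonneg (mul_nonneg hxnn htnn) htnn,
        mul_nonneg (mul_nonneg hxnn hxnn) htnn, pow_nonneg hxnn 3]

end xmvals

lemma poly_bound (s : ℝ) : 10000 * |s| ≤ 4900 + 5200 * s^2 - 100 * s^4 + s^6 := by
  have ha : 0 ≤ |s| := abs_nonneg s
  have h2 : s^2 = |s|^2 := (sq_abs s).symm
  have h4 : s^4 = |s|^4 := by rw [show s^4 = (s^2)^2 by ring, h2]; ring
  have h6 : s^6 = |s|^6 := by rw [show s^6 = (s^2)^3 by ring, h2]; ring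
  rw [h2, h4, h6]
  set a := |s| with hadef
  clear_value a
  rcases le_or_gt a (5/6) with h | h
  · nlinarith [sq_nonneg (72*a - 70), mul_nonneg ha (mul_nonneg ha (mul_nonneg ha ha)),
      mul_nonneg (mul_nonneg ha ha) (sub_nonneg.2 h), sq_nonneg a,
      mul_nonneg ha (sub_nonneg.2 h), pow_nonneg ha 6]
  · have hQ : 0 ≤ a^4 + 2*a^3 - 97*a^2 - 196*a + 4905 := by
      rcases le_or_gt a 25 with h25 | h25
      · nlinarith [sq_nonneg (a^2 + a - 49)]
      · nlinarith [mul_nonneg (mul_nonneg ha ha) (by linarith : (0:ℝ) ≤ a - 25),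
          mul_nonneg (by linarith : (0:ℝ) ≤ a - 25) (by linarith : (0:ℝ) ≤ a - 25),
          mul_nonneg (mul_nonneg (mul_nonneg ha ha) ha) (by linarith : (0:ℝ) ≤ a - 25)]
    nlinarith [mul_nonneg (sq_nonneg (a-1)) hQ]

theorem khinchine_deficit_near_three_quarters :
    ∃ δ > (0 : ℝ), ∃ q < (1 : ℝ),
      ∀ p : ℝ, |p - 3 / 4| ≤ δ →
        ∀ n : ℕ, 1 ≤ n → ∀ l : Fin n → ℝ, (∑ j, (l j) ^ 2) = 1 →
          expAbsSum p n l ≤ q := by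
  refine ⟨1/100, by norm_num, 199/200, by norm_num, ?_⟩
  intro p hp n hn l hl
  rw [abs_le] at hp
  have hp1 : 37/50 ≤ p := by linarith [hp.1]
  have hp2 : p ≤ 19/25 := by linarith [hp.2]
  obtain ⟨m0, m1, m2, m3, m4l, m4u, m6⟩ := mom_bounds hp1 hp2 n l
  rw [hl] at m2 m4l m6
  norm_num at m4l m6
  have hw : ∀ σ : Fin n → Bool, (0:ℝ) ≤ ∏ j, wt p (σ j) := by
    intro σ
    refine Finset.prod_nonneg fun j _ => ?_
    unfold wt
    split <;> linarith
  have key : 10000 * expAbsSum p n l ≤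
      4900 * mom p n l 0 + 5200 * mom p n l 2 - 100 * mom p n l 4 + mom p n l 6 := by
    have expand : 4900 * mom p n l 0 + 5200 * mom p n l 2 - 100 * mom p n l 4 + mom p n l 6
        = ∑ σ : Fin n → Bool, (∏ j, wt p (σ j)) *
            (4900 + 5200 * (∑ j, l j * xiVal p (σ j))^2
              - 100 * (∑ j, l j * xiVal p (σ j))^4 + (∑ j, l j * xiVal p (σ j))^6) := by
      unfold mom
      rw [Finset.mul_sum, Finset.mul_sum, Finset.mul_sum]
      rw [← Finset.sum_add_distrib, ← Finset.sum_sub_distrib, ← Finset.sum_add_distrib]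
      exact Finset.sum_congr rfl fun σ _ => by ring
    rw [expand]
    unfold expAbsSum
    rw [Finset.mul_sum]
    refine Finset.sum_le_sum fun σ _ => ?_
    rw [show 10000 * ((∏ j, wt p (σ j)) * |∑ j, l j * xiVal p (σ j)|)
        = (∏ j, wt p (σ j)) * (10000 * |∑ j, l j * xiVal p (σ j)|) by ring]
    exact mul_le_mul_of_nonneg_left (poly_bound _) (hw σ)
  rw [m0, m2] at key
  linarith
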